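/- arXiv:2502.03707 — 2 statements merged into one kernel-verified Lean document; each statement's English description precedes it below -/
import Mathlib

section
/- Let μ be a finite positive Borel measure on ℝ with Borel transform m, let 0 ≤ η < 1 and let E ∈ ℝ. If liminf_{ε→0⁺} ε^{1−η} · Im m(E+iε) > 0, then γ_μ⁺(E) ≤ η·(2 − γ_μ⁻(E))/(2 − η). -/
open MeasureTheory Filter Set

/-- `γ_μ⁺(E) = limsup_{ε→0⁺} log μ((E−ε,E+ε)) / log ε`. -/
noncomputable def gammaPlus (μ : Measure ℝ) (E : ℝ) : ℝ :=
  Filter.limsup (fun ε : ℝ => Real.log (μ (Set.Ioo (E - ε) (E + ε))).toReal / Real.log ε)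
    (nhdsWithin 0 (Set.Ioi 0))

/-- `γ_μ⁻(E) = liminf_{ε→0⁺} log μ((E−ε,E+ε)) / log ε`. -/
noncomputable def gammaMinus (μ : Measure ℝ) (E : ℝ) : ℝ :=
  Filter.liminf (fun ε : ℝ => Real.log (μ (Set.Ioo (E - ε) (E + ε))).toReal / Real.log ε)
    (nhdsWithin 0 (Set.Ioi 0))

/-- The Borel transform `m(z) = ∫ (x - z)⁻¹ dμ(x)` of a measure `μ` on `ℝ`. -/
noncomputable def borelTransform (μ : Measure ℝ) (z : ℂ) : ℂ :=
  ∫ x : ℝ, ((x : ℂ) - z)⁻¹ ∂μ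

lemma L1 (E ε x : ℝ) : (((x:ℂ) - (E + ε*Complex.I))⁻¹).im = ε / ((x-E)^2 + ε^2) := by
  rw [Complex.inv_im]
  have h1 : ((x:ℂ) - (E + ε*Complex.I)).im = -ε := by simp
  have h2 : ((x:ℂ) - (E + ε*Complex.I)).re = x - E := by simp
  rw [Complex.normSq_apply, h1, h2]
  ring

lemma Labs (E ε x : ℝ) (hε : 0 < ε) : ε ≤ ‖(x:ℂ) - (E + ε*Complex.I)‖ :=
  calc ε = |((x:ℂ) - (E + ε*Complex.I)).im| := by simp [abs_of_pos hε]
    _ ≤ ‖_‖ := Complex.abs_im_le_norm _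

lemma L2 (μ : Measure ℝ) [IsFiniteMeasure μ] (E ε : ℝ) (hε : 0 < ε) :
    Integrable (fun x : ℝ => ((x:ℂ) - (E + ε*Complex.I))⁻¹) μ := by
  apply Integrable.mono' (integrable_const (ε⁻¹))
  · apply Continuous.aestronglyMeasurable
    apply Continuous.inv₀ (by continuity)
    intro x hx
    have h0 : (0:ℝ) < ‖(x:ℂ) - (E + ε*Complex.I)‖ := lt_of_lt_of_le hε (Labs E ε x hε)
    rw [hx] at h0; simp at h0
  · refine Eventually.of_forall fun x => ?_
    rw [norm_inv]
    exact inv_anti₀ hε (Labs E ε x hε)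

lemma L3 (μ : Measure ℝ) [IsFiniteMeasure μ] (E ε : ℝ) (hε : 0 < ε) :
    (borelTransform μ (E + ε*Complex.I)).im = ∫ x, ε / ((x-E)^2 + ε^2) ∂μ := by
  have := integral_im (μ := μ) (𝕜 := ℂ) (f := fun x : ℝ => ((x:ℂ) - (E + ε*Complex.I))⁻¹) (L2 μ E ε hε)
  rw [borelTransform]
  rw [show ((∫ x : ℝ, ((x:ℂ) - (E + ε*Complex.I))⁻¹ ∂μ).im) = RCLike.im (K := ℂ) (∫ x : ℝ, ((x:ℂ) - (E + ε*Complex.I))⁻¹ ∂μ) from rfl, ← this]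
  exact integral_congr_ae (Eventually.of_forall fun x => (L1 E ε x))

lemma L4 (t : ℝ) (ht : 1 ≤ t) : ∃ k : ℕ, (2:ℝ)^k ≤ t ∧ t < 2^(k+1) := by
  have ht0 : (0:ℝ) < t := lt_of_lt_of_le one_pos ht
  have hlb : 0 ≤ Real.logb 2 t := Real.logb_nonneg one_lt_two ht
  refine ⟨⌊Real.logb 2 t⌋₊, ?_, ?_⟩
  · have h1 : ((⌊Real.logb 2 t⌋₊ : ℝ)) ≤ Real.logb 2 t := Nat.floor_le hlb
    calc (2:ℝ)^(⌊Real.logb 2 t⌋₊) = (2:ℝ)^((⌊Real.logb 2 t⌋₊ : ℝ)) := (Real.rpow_natCast 2 _).symm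
      _ ≤ (2:ℝ)^(Real.logb 2 t) := Real.rpow_le_rpow_of_exponent_le one_le_two h1
      _ = t := Real.rpow_logb two_pos (by norm_num) ht0
  · have h2 : Real.logb 2 t < (⌊Real.logb 2 t⌋₊ : ℝ) + 1 := Nat.lt_floor_add_one _
    calc t = (2:ℝ)^(Real.logb 2 t) := (Real.rpow_logb two_pos (by norm_num) ht0).symm
      _ < (2:ℝ)^(((⌊Real.logb 2 t⌋₊:ℝ)) + 1) := Real.rpow_lt_rpow_of_exponent_lt one_lt_two h2
      _ = (2:ℝ)^(((⌊Real.logb 2 t⌋₊ + 1 : ℕ) : ℝ)) := by push_cast; ring_nf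
      _ = (2:ℝ)^(⌊Real.logb 2 t⌋₊ + 1) := Real.rpow_natCast 2 _

lemma Lalg2 (K γ' ε δ : ℝ) (k : ℕ) (hK1 : 1 ≤ K) (hε : 0 < ε) (hδ : 0 < δ) :
    (ε^2 / (2^k * δ)^2) * (K * ((2:ℝ)^(k+1)*δ) ^ γ')
      = (K * 2^γ' * (ε^2 * δ^(γ'-2))) * ((2:ℝ)^(γ'-2)) ^ k := by
  have hK0 : (0:ℝ) < K := lt_of_lt_of_le one_pos hK1
  have hL : 0 < (ε^2 / (2^k * δ)^2) * (K * ((2:ℝ)^(k+1)*δ) ^ γ') := by positivity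
  have hR : 0 < (K * (2:ℝ)^γ' * (ε^2 * δ^(γ'-2))) * ((2:ℝ)^(γ'-2)) ^ k := by positivity
  have h2 : (0:ℝ) < 2 := two_pos
  rw [← Real.exp_log hL, ← Real.exp_log hR]
  congr 1
  rw [Real.log_mul (by positivity) (by positivity),
      Real.log_mul (by positivity) (by positivity),
      Real.log_mul (by positivity) (by positivity),
      Real.log_mul (by positivity) (by positivity),
      Real.log_div (by positivity) (by positivity),
      Real.log_mul (by positivity) (by positivity),
      Real.log_mul (by positivity) (by positivity)]
  simp only [Real.log_pow, Real.log_rpow h2, Real.log_rpow hδ]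
  rw [Real.log_rpow (by positivity), Real.log_mul (by positivity) (by positivity),
      Real.log_mul (by positivity) (by positivity), Real.log_pow]
  simp only [Real.log_pow]
  push_cast
  ring

lemma L5 (μ : Measure ℝ) [IsFiniteMeasure μ] (E : ℝ) {K γ' : ℝ} (hK1 : 1 ≤ K)
    (hγ0 : 0 ≤ γ') (hγ2 : γ' < 2)
    (hK : ∀ r : ℝ, 0 < r → (μ (Ioo (E - r) (E + r))).toReal ≤ K * r ^ γ')
    {ε δ : ℝ} (hε : 0 < ε) (hδ : 0 < δ) :
    ε * (borelTransform μ (E + ε*Complex.I)).im ≤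
      (μ (Ioo (E - δ) (E + δ))).toReal + (K * 2^γ' / (1 - 2^(γ'-2))) * (ε^2 * δ^(γ'-2)) := by
  set q : ℝ := (2:ℝ)^(γ'-2) with hq
  have hq0 : 0 < q := Real.rpow_pos_of_pos two_pos _
  have hq1 : q < 1 := Real.rpow_lt_one_of_one_lt_of_neg one_lt_two (by linarith)
  -- the positive-valued integrand
  have hden : ∀ x : ℝ, 0 < (x-E)^2 + ε^2 := fun x => by positivity
  have hmeas : Measurable fun x : ℝ => ε^2 / ((x-E)^2 + ε^2) := by
    apply Measurable.div measurable_const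
    fun_prop
  -- step 1 : express ε * Im m as an integral
  have step1 : ε * (borelTransform μ (E + ε*Complex.I)).im
      = ∫ x, ε^2 / ((x-E)^2 + ε^2) ∂μ := by
    rw [L3 μ E ε hε, ← integral_const_mul]
    congr 1; ext x; rw [← mul_div_assoc]; ring_nf
  -- step 2 : compare with the lintegral
  set F : ℝ → ENNReal := fun x => ENNReal.ofReal (ε^2 / ((x-E)^2 + ε^2)) with hF
  have step2 : ∫ x, ε^2 / ((x-E)^2 + ε^2) ∂μ = (∫⁻ x, F x ∂μ).toReal := by
    rw [integral_eq_lintegral_of_nonneg_ae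
      (Eventually.of_forall fun x => by positivity) hmeas.aestronglyMeasurable]
  -- annuli
  set A : ℕ → Set ℝ := fun k => {x | 2^k * δ ≤ |x - E| ∧ |x - E| < 2^(k+1) * δ} with hA
  have hcover : (univ : Set ℝ) ⊆ Ioo (E - δ) (E + δ) ∪ ⋃ k, A k := by
    intro x _
    rcases lt_or_ge (|x - E|) δ with hx | hx
    · left
      rw [abs_sub_lt_iff] at hx
      constructor <;> [linarith [hx.2]; linarith [hx.1]]
    · right
      obtain ⟨k, hk1, hk2⟩ := L4 (|x - E| / δ) ((one_le_div hδ).2 hx)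
      exact mem_iUnion.2 ⟨k, (le_div_iff₀ hδ).1 hk1, (div_lt_iff₀ hδ).1 hk2⟩
  -- bound on the ball
  have hball : ∫⁻ x in Ioo (E - δ) (E + δ), F x ∂μ ≤ μ (Ioo (E - δ) (E + δ)) := by
    calc ∫⁻ x in Ioo (E - δ) (E + δ), F x ∂μ ≤ ∫⁻ _ in Ioo (E - δ) (E + δ), 1 ∂μ := by
          apply lintegral_mono
          intro x
          refine ENNReal.ofReal_le_one.2 ?_
          rw [div_le_one (hden x)]
          nlinarith [sq_nonneg (x - E)]
      _ = μ (Ioo (E - δ) (E + δ)) := by simp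
  -- bound on each annulus
  have hμr : ∀ r : ℝ, 0 < r → μ (Ioo (E - r) (E + r)) ≤ ENNReal.ofReal (K * r ^ γ') := by
    intro r hr
    rw [← ENNReal.ofReal_toReal (measure_ne_top μ _)]
    exact ENNReal.ofReal_le_ofReal (hK r hr)
  have hannulus : ∀ k : ℕ, ∫⁻ x in A k, F x ∂μ ≤
      ENNReal.ofReal (K * 2^γ' * (ε^2 * δ^(γ'-2))) * ENNReal.ofReal q ^ k := by
    intro k
    have h2k : (0:ℝ) < 2^k * δ := by positivity
    have hbd : ∀ x ∈ A k, F x ≤ ENNReal.ofReal (ε^2 / (2^k * δ)^2) := by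
      intro x hx
      refine ENNReal.ofReal_le_ofReal ?_
      apply div_le_div_of_nonneg_left (by positivity) (by positivity)
      calc (2^k*δ)^2 ≤ |x - E|^2 := by
            apply sq_le_sq' _ hx.1; linarith [abs_nonneg (x - E), hx.1]
        _ ≤ (x-E)^2 + ε^2 := by rw [sq_abs]; nlinarith
    have hsub : A k ⊆ Ioo (E - 2^(k+1)*δ) (E + 2^(k+1)*δ) := by
      intro x hx
      have := hx.2
      rw [abs_sub_lt_iff] at this
      constructor <;> [linarith [this.2]; linarith [this.1]]
    calc ∫⁻ x in A k, F x ∂μ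
        ≤ ∫⁻ _ in A k, ENNReal.ofReal (ε^2 / (2^k * δ)^2) ∂μ := setLIntegral_mono measurable_const hbd
      _ = ENNReal.ofReal (ε^2 / (2^k * δ)^2) * μ (A k) := by
          rw [setLIntegral_const, mul_comm]
      _ ≤ ENNReal.ofReal (ε^2 / (2^k * δ)^2) * ENNReal.ofReal (K * (2^(k+1)*δ) ^ γ') := by
          gcongr
          exact le_trans (measure_mono hsub) (hμr _ (by positivity))
      _ = ENNReal.ofReal ((ε^2 / (2^k * δ)^2) * (K * (2^(k+1)*δ) ^ γ')) := by
          rw [← ENNReal.ofReal_mul (by positivity)]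
      _ = ENNReal.ofReal ((K * 2^γ' * (ε^2 * δ^(γ'-2))) * q ^ k) := by
          rw [Lalg2 K γ' ε δ k hK1 hε hδ]
      _ = ENNReal.ofReal (K * 2^γ' * (ε^2 * δ^(γ'-2))) * ENNReal.ofReal q ^ k := by
          rw [ENNReal.ofReal_mul (by positivity), ENNReal.ofReal_pow hq0.le]
  -- assemble
  have hq1' : (1:ℝ) - q > 0 := by linarith
  have hsum : ∫⁻ x, F x ∂μ ≤ μ (Ioo (E - δ) (E + δ))
      + ENNReal.ofReal ((K * 2^γ' * (ε^2 * δ^(γ'-2))) * (1-q)⁻¹) := by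
    calc ∫⁻ x, F x ∂μ = ∫⁻ x in (univ : Set ℝ), F x ∂μ := by rw [setLIntegral_univ]
      _ ≤ ∫⁻ x in (Ioo (E - δ) (E + δ) ∪ ⋃ k, A k), F x ∂μ := lintegral_mono_set hcover
      _ ≤ (∫⁻ x in Ioo (E - δ) (E + δ), F x ∂μ) + ∫⁻ x in ⋃ k, A k, F x ∂μ :=
          lintegral_union_le _ _ _
      _ ≤ μ (Ioo (E - δ) (E + δ)) + ∑' k, ∫⁻ x in A k, F x ∂μ := by
          exact add_le_add hball (lintegral_iUnion_le _ _)
      _ ≤ μ (Ioo (E - δ) (E + δ))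
          + ∑' k, ENNReal.ofReal (K * 2^γ' * (ε^2 * δ^(γ'-2))) * ENNReal.ofReal q ^ k := by
          gcongr with k
          exact hannulus k
      _ = μ (Ioo (E - δ) (E + δ))
          + ENNReal.ofReal (K * 2^γ' * (ε^2 * δ^(γ'-2))) * (1 - ENNReal.ofReal q)⁻¹ := by
          rw [ENNReal.tsum_mul_left, ENNReal.tsum_geometric]
      _ = μ (Ioo (E - δ) (E + δ))
          + ENNReal.ofReal ((K * 2^γ' * (ε^2 * δ^(γ'-2))) * (1-q)⁻¹) := by
          congr 1
          have hinv : ENNReal.ofReal ((1-q)⁻¹) = (1 - ENNReal.ofReal q)⁻¹ := by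
            rw [ENNReal.ofReal_inv_of_pos hq1', ENNReal.ofReal_sub 1 hq0.le, ENNReal.ofReal_one]
          rw [← hinv, ← ENNReal.ofReal_mul (by positivity)]
  rw [step1, step2]
  have hfin : μ (Ioo (E - δ) (E + δ)) + ENNReal.ofReal ((K * 2^γ' * (ε^2 * δ^(γ'-2))) * (1-q)⁻¹) ≠ ⊤ :=
    ENNReal.add_ne_top.2 ⟨measure_ne_top μ _, ENNReal.ofReal_ne_top⟩
  calc (∫⁻ x, F x ∂μ).toReal
      ≤ (μ (Ioo (E - δ) (E + δ)) + ENNReal.ofReal ((K * 2^γ' * (ε^2 * δ^(γ'-2))) * (1-q)⁻¹)).toReal :=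
        ENNReal.toReal_mono hfin hsum
    _ = (μ (Ioo (E - δ) (E + δ))).toReal + (K * 2^γ' * (ε^2 * δ^(γ'-2))) * (1-q)⁻¹ := by
        rw [ENNReal.toReal_add (measure_ne_top μ _) ENNReal.ofReal_ne_top,
          ENNReal.toReal_ofReal (by positivity)]
    _ = (μ (Ioo (E - δ) (E + δ))).toReal + (K * 2^γ' / (1 - q)) * (ε^2 * δ^(γ'-2)) := by
        ring

lemma Linv : Tendsto (fun r : ℝ => (Real.log r)⁻¹) (nhdsWithin 0 (Set.Ioi 0)) (nhds 0) := by
  have h2 : Tendsto (fun r : ℝ => -Real.log r) (nhdsWithin 0 (Set.Ioi 0)) atTop :=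
    tendsto_neg_atBot_atTop.comp Real.tendsto_log_nhdsGT_zero
  have h3 := h2.inv_tendsto_atTop
  have : (fun r : ℝ => (Real.log r)⁻¹) = fun r : ℝ => -((-Real.log r)⁻¹) := by
    funext r; rw [inv_neg, neg_neg]
  rw [this]
  simpa using h3.neg

lemma Ldiv (c : ℝ) : Tendsto (fun r : ℝ => c / Real.log r) (nhdsWithin 0 (Set.Ioi 0)) (nhds 0) := by
  have := Linv.const_mul c
  simpa [div_eq_mul_inv] using this

/-- From an eventual lower bound `μ(B_r) ≥ c r^p` we get `gammaPlus ≤ p`, an eventual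
upper bound on the log-quotient, and eventual positivity. -/
lemma L6 (μ : Measure ℝ) [IsFiniteMeasure μ] (E c p : ℝ) (hc : 0 < c)
    (hev : ∀ᶠ r in nhdsWithin 0 (Set.Ioi 0), c * r^p ≤ (μ (Set.Ioo (E-r) (E+r))).toReal) :
    gammaPlus μ E ≤ p
    ∧ (∀ᶠ r in nhdsWithin 0 (Set.Ioi 0),
        Real.log (μ (Set.Ioo (E - r) (E + r))).toReal / Real.log r ≤ p + 1)
    ∧ (∀ᶠ r in nhdsWithin 0 (Set.Ioi 0), 0 < (μ (Set.Ioo (E-r) (E+r))).toReal)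
    ∧ (∀ᶠ r in nhdsWithin 0 (Set.Ioi 0),
        -1 ≤ Real.log (μ (Set.Ioo (E - r) (E + r))).toReal / Real.log r) := by
  set f : ℝ → ℝ := fun r => Real.log (μ (Set.Ioo (E - r) (E + r))).toReal / Real.log r with hf
  have hsmall : ∀ᶠ r in nhdsWithin 0 (Set.Ioi 0), r ∈ Set.Ioo (0:ℝ) 1 :=
    Ioo_mem_nhdsGT_of_mem ⟨le_refl 0, one_pos⟩
  have hpos : ∀ᶠ r in nhdsWithin 0 (Set.Ioi 0), 0 < (μ (Set.Ioo (E-r) (E+r))).toReal := by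
    filter_upwards [hev, hsmall] with r h1 h2
    have hr0 : 0 < r := h2.1
    exact lt_of_lt_of_le (by positivity) h1
  -- pointwise upper bound
  have hub : ∀ᶠ r in nhdsWithin 0 (Set.Ioi 0), f r ≤ p + Real.log c / Real.log r := by
    filter_upwards [hev, hsmall] with r h1 h2
    have hr0 : 0 < r := h2.1
    have hlr : Real.log r < 0 := Real.log_neg hr0 h2.2
    have hμ0 : 0 < c * r ^ p := by positivity
    have hlog : Real.log c + p * Real.log r ≤ Real.log (μ (Set.Ioo (E-r) (E+r))).toReal := by
      have := Real.log_le_log hμ0 h1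
      rwa [Real.log_mul (ne_of_gt hc) (by positivity), Real.log_rpow hr0] at this
    have := div_le_div_of_nonpos_of_le hlr.le hlog
    rw [hf]
    calc Real.log (μ (Set.Ioo (E-r) (E+r))).toReal / Real.log r
        ≤ (Real.log c + p * Real.log r) / Real.log r := this
      _ = p + Real.log c / Real.log r := by
          have hne : Real.log r ≠ 0 := ne_of_lt hlr
          field_simp
          ring
  -- pointwise lower bound (for coboundedness)
  have hlb : ∀ᶠ r in nhdsWithin 0 (Set.Ioi 0),
      Real.log (μ Set.univ).toReal / Real.log r ≤ f r := by
    filter_upwards [hpos, hsmall] with r h1 h2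
    have hlr : Real.log r < 0 := Real.log_neg h2.1 h2.2
    have : Real.log (μ (Set.Ioo (E-r) (E+r))).toReal ≤ Real.log (μ Set.univ).toReal :=
      Real.log_le_log h1 (ENNReal.toReal_mono (measure_ne_top μ _) (measure_mono (Set.subset_univ _)))
    exact div_le_div_of_nonpos_of_le hlr.le this
  have htendb : Tendsto (fun r : ℝ => p + Real.log c / Real.log r)
      (nhdsWithin 0 (Set.Ioi 0)) (nhds p) := by
    simpa using (tendsto_const_nhds (x := p) (f := nhdsWithin (0:ℝ) (Set.Ioi 0))).add (Ldiv (Real.log c))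
  have htendlb : Tendsto (fun r : ℝ => Real.log (μ Set.univ).toReal / Real.log r)
      (nhdsWithin 0 (Set.Ioi 0)) (nhds 0) := Ldiv _
  have hcob : IsCoboundedUnder (· ≤ ·) (nhdsWithin (0:ℝ) (Set.Ioi 0)) f := by
    refine isCoboundedUnder_le_of_eventually_le (x := -1) _ ?_
    filter_upwards [hlb, htendlb.eventually (eventually_gt_nhds (by norm_num : (-1:ℝ) < 0))] with r h1 h2
    linarith
  have hbd : IsBoundedUnder (· ≤ ·) (nhdsWithin (0:ℝ) (Set.Ioi 0))
      (fun r : ℝ => p + Real.log c / Real.log r) := htendb.isBoundedUnder_le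
  have hm1 : ∀ᶠ r in nhdsWithin (0:ℝ) (Set.Ioi 0),
      -1 ≤ Real.log (μ (Set.Ioo (E - r) (E + r))).toReal / Real.log r := by
    filter_upwards [hlb, htendlb.eventually (eventually_gt_nhds (by norm_num : (-1:ℝ) < 0))] with r h1 h2
    exact le_trans h2.le h1
  refine ⟨?_, ?_, hpos, hm1⟩
  · calc gammaPlus μ E = limsup f (nhdsWithin 0 (Set.Ioi 0)) := rfl
      _ ≤ limsup (fun r : ℝ => p + Real.log c / Real.log r) (nhdsWithin 0 (Set.Ioi 0)) :=
          limsup_le_limsup hub hcob hbd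
      _ = p := htendb.limsup_eq
  · filter_upwards [hub, htendb.eventually (eventually_le_nhds (by linarith : p < p + 1))] with r h1 h2
    exact le_trans h1 h2

lemma L7 (μ : Measure ℝ) [IsFiniteMeasure μ] (E η c K γ' s : ℝ) (hc : 0 < c) (hK1 : 1 ≤ K)
    (hγ0 : 0 ≤ γ') (hγ2 : γ' < 2) (hs : 0 < s) (hη0 : 0 ≤ η)
    (hse : η < 2 + s*(γ'-2))
    (hK : ∀ r : ℝ, 0 < r → (μ (Ioo (E - r) (E + r))).toReal ≤ K * r ^ γ')
    (hev : ∀ᶠ (ε : ℝ) in nhdsWithin (0:ℝ) (Set.Ioi 0),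
      c * ε^η ≤ ε * (borelTransform μ (E + ε*Complex.I)).im) :
    ∀ᶠ (r : ℝ) in nhdsWithin (0:ℝ) (Set.Ioi 0),
      (c/2) * r^(η/s) ≤ (μ (Set.Ioo (E-r) (E+r))).toReal := by
  set C : ℝ := K * 2^γ' / (1 - 2^(γ'-2)) with hC
  have hq1 : (2:ℝ)^(γ'-2) < 1 := Real.rpow_lt_one_of_one_lt_of_neg one_lt_two (by linarith)
  have hq0 : (0:ℝ) < 2^(γ'-2) := Real.rpow_pos_of_pos two_pos _
  have hCpos : 0 < C := by
    apply div_pos (by positivity) (by linarith)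
  set e : ℝ := 2 + s*(γ'-2) - η with he
  have he0 : 0 < e := by linarith
  -- eventual estimate in ε
  have key : ∀ᶠ (ε : ℝ) in nhdsWithin (0:ℝ) (Set.Ioi 0),
      (c/2) * ε^η ≤ (μ (Set.Ioo (E - ε^s) (E + ε^s))).toReal := by
    have hsm : ∀ᶠ (ε : ℝ) in nhdsWithin (0:ℝ) (Set.Ioi 0),
        ε ∈ Set.Ioo (0:ℝ) (min 1 ((c/(2*C))^(1/e))) := by
      apply Ioo_mem_nhdsGT_of_mem
      refine ⟨le_refl 0, lt_min one_pos ?_⟩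
      positivity
    filter_upwards [hev, hsm] with ε h1 h2
    have hε0 : 0 < ε := h2.1
    have hδ0 : 0 < ε^s := Real.rpow_pos_of_pos hε0 _
    have hL5 := L5 μ E hK1 hγ0 hγ2 hK hε0 hδ0
    -- ε^2 * (ε^s)^(γ'-2) = ε^(η+e)
    have hexp : ε^(2:ℕ) * (ε^s)^(γ'-2) = ε^η * ε^e := by
      rw [← Real.rpow_natCast ε 2, ← Real.rpow_mul hε0.le, ← Real.rpow_add hε0,
        ← Real.rpow_add hε0]
      norm_num [he]

    have hsmall : C * ε^e ≤ c/2 := by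
      have h3 : ε ≤ (c/(2*C))^(1/e) := le_of_lt (lt_of_lt_of_le h2.2 (min_le_right _ _))
      have h4 : ε^e ≤ ((c/(2*C))^(1/e))^e := Real.rpow_le_rpow hε0.le h3 he0.le
      have h5 : ((c/(2*C))^(1/e))^e = c/(2*C) := by
        rw [← Real.rpow_mul (by positivity), one_div, inv_mul_cancel₀ (ne_of_gt he0),
          Real.rpow_one]
      rw [h5] at h4
      calc C * ε^e ≤ C * (c/(2*C)) := by gcongr
        _ = c/2 := by field_simp
    have hεη : (0:ℝ) < ε^η := Real.rpow_pos_of_pos hε0 _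
    have : c * ε^η ≤ (μ (Set.Ioo (E - ε^s) (E + ε^s))).toReal + (c/2) * ε^η := by
      calc c * ε^η ≤ ε * (borelTransform μ (E + ε*Complex.I)).im := h1
        _ ≤ (μ (Set.Ioo (E - ε^s) (E + ε^s))).toReal + C * (ε^(2:ℕ) * (ε^s)^(γ'-2)) := hL5
        _ = (μ (Set.Ioo (E - ε^s) (E + ε^s))).toReal + (C * ε^e) * ε^η := by
            rw [hexp]; ring
        _ ≤ (μ (Set.Ioo (E - ε^s) (E + ε^s))).toReal + (c/2) * ε^η := by
            gcongr
    linarith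
  -- substitute r = ε^s
  rw [eventually_iff, mem_nhdsGT_iff_exists_Ioo_subset] at key
  obtain ⟨b, hb, hsub⟩ := key
  have hb0 : 0 < b := hb
  rw [eventually_iff, mem_nhdsGT_iff_exists_Ioo_subset]
  refine ⟨b^s, Real.rpow_pos_of_pos hb0 _, ?_⟩
  intro r hr
  have hr0 : 0 < r := hr.1
  have hε0 : 0 < r^(1/s) := Real.rpow_pos_of_pos hr0 _
  have hεb : r^(1/s) < b := by
    have := Real.rpow_lt_rpow hr0.le hr.2 (by positivity : 0 < 1/s)
    rwa [← Real.rpow_mul hb0.le, mul_one_div, div_self (ne_of_gt hs), Real.rpow_one] at this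
  have h1 := hsub ⟨hε0, hεb⟩
  have h2 : (r^(1/s))^s = r := by
    rw [← Real.rpow_mul hr0.le, one_div, inv_mul_cancel₀ (ne_of_gt hs), Real.rpow_one]
  have h3 : (r^(1/s))^η = r^(η/s) := by
    rw [← Real.rpow_mul hr0.le, one_div, inv_mul_eq_div]
  simp only [Set.mem_setOf_eq] at h1 ⊢
  rwa [h2, h3] at h1

/-- Extract a positive eventual lower bound from a positive liminf (handling the
junk-value case where the function is not cobounded). -/
lemma L10 {g : ℝ → ℝ} (h : 0 < Filter.liminf g (nhdsWithin (0:ℝ) (Set.Ioi 0))) :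
    ∃ c : ℝ, 0 < c ∧ ∀ᶠ (ε : ℝ) in nhdsWithin (0:ℝ) (Set.Ioi 0), c < g ε := by
  set l := nhdsWithin (0:ℝ) (Set.Ioi 0)
  have hcob : IsBoundedUnder (· ≥ ·) l g := by
    by_contra hnb
    have hemp : {a : ℝ | ∀ᶠ ε in l, a ≤ g ε} = ∅ := by
      rw [Set.eq_empty_iff_forall_notMem]
      intro a ha
      exact hnb ⟨a, eventually_map.2 ha⟩
    rw [liminf_eq, hemp, Real.sSup_empty] at h
    exact lt_irrefl 0 h
  refine ⟨Filter.liminf g l / 2, by linarith, ?_⟩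
  exact eventually_lt_of_lt_liminf (by linarith) hcob

/-- From `γ' < γ⁻` obtain a global power bound on the measure of small intervals. -/
lemma L8 (μ : Measure ℝ) [IsFiniteMeasure μ] (E γ' : ℝ) (hγ'0 : 0 < γ')
    (hcob : IsBoundedUnder (· ≥ ·) (nhdsWithin (0:ℝ) (Set.Ioi 0))
      (fun r : ℝ => Real.log (μ (Set.Ioo (E - r) (E + r))).toReal / Real.log r))
    (hγ : γ' < gammaMinus μ E) :
    ∃ K : ℝ, 1 ≤ K ∧ ∀ r : ℝ, 0 < r → (μ (Set.Ioo (E - r) (E + r))).toReal ≤ K * r ^ γ' := by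
  have hev : ∀ᶠ (r : ℝ) in nhdsWithin (0:ℝ) (Set.Ioi 0),
      γ' < Real.log (μ (Set.Ioo (E - r) (E + r))).toReal / Real.log r :=
    eventually_lt_of_lt_liminf hγ hcob
  have hsm : ∀ᶠ (r : ℝ) in nhdsWithin (0:ℝ) (Set.Ioi 0), r ∈ Set.Ioo (0:ℝ) 1 :=
    Ioo_mem_nhdsGT_of_mem ⟨le_refl 0, one_pos⟩
  have hloc : ∀ᶠ (r : ℝ) in nhdsWithin (0:ℝ) (Set.Ioi 0),
      (μ (Set.Ioo (E - r) (E + r))).toReal ≤ r ^ γ' := by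
    filter_upwards [hev, hsm] with r h1 h2
    have hlr : Real.log r < 0 := Real.log_neg h2.1 h2.2
    set m := (μ (Set.Ioo (E - r) (E + r))).toReal with hm
    have hm0 : 0 ≤ m := ENNReal.toReal_nonneg
    have hr0 : 0 < r := h2.1
    rcases eq_or_lt_of_le hm0 with hz | hpos
    · rw [← hz]; positivity
    · have hlog : Real.log m < γ' * Real.log r := by
        have h2' := mul_lt_mul_of_neg_right h1 hlr
        rw [div_mul_cancel₀ _ (ne_of_lt hlr)] at h2'
        linarith
      have : m < r ^ γ' := by
        rw [← Real.exp_log hpos, Real.rpow_def_of_pos h2.1]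
        exact Real.exp_lt_exp.2 (by linarith [hlog])
      exact this.le
  rw [eventually_iff, mem_nhdsGT_iff_exists_Ioo_subset] at hloc
  obtain ⟨b, hb, hsub⟩ := hloc
  have hb0 : (0:ℝ) < b := hb
  set t0 := min b 1 / 2 with ht0def
  have ht00 : 0 < t0 := by
    have : (0:ℝ) < min b 1 := lt_min hb0 one_pos
    positivity
  have ht0b : t0 < b := by
    have h1 : min b 1 ≤ b := min_le_left _ _
    linarith
  set M := (μ Set.univ).toReal with hM
  have hM0 : 0 ≤ M := ENNReal.toReal_nonneg
  refine ⟨max 1 (M / t0 ^ γ'), le_max_left _ _, ?_⟩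
  intro r hr
  rcases lt_or_ge r b with hrb | hrb
  · calc (μ (Set.Ioo (E - r) (E + r))).toReal ≤ r ^ γ' := hsub ⟨hr, hrb⟩
      _ ≤ max 1 (M / t0 ^ γ') * r ^ γ' := by
          nth_rewrite 1 [← one_mul (r ^ γ')]
          exact mul_le_mul_of_nonneg_right (le_max_left _ _) (by positivity)
  · have ht0r : t0 ≤ r := le_trans ht0b.le hrb
    have hpow : t0 ^ γ' ≤ r ^ γ' := Real.rpow_le_rpow ht00.le ht0r hγ'0.le
    calc (μ (Set.Ioo (E - r) (E + r))).toReal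
        ≤ M := ENNReal.toReal_mono (measure_ne_top μ _) (measure_mono (Set.subset_univ _))
      _ = (M / t0 ^ γ') * t0 ^ γ' := by
          rw [div_mul_cancel₀ _ (ne_of_gt (by positivity : (0:ℝ) < t0 ^ γ'))]
      _ ≤ max 1 (M / t0 ^ γ') * r ^ γ' := by
          gcongr
          exact le_max_right _ _

/-- If `liminf_{ε→0⁺} ε^{1−η} Im m(E+iε) > 0` then
`γ_μ⁺(E) ≤ η (2 − γ_μ⁻(E)) / (2 − η)`. -/
theorem stmt_1 (μ : Measure ℝ) [IsFiniteMeasure μ] (η E : ℝ) (hη0 : 0 ≤ η) (hη1 : η < 1)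
    (h : 0 < Filter.liminf
      (fun ε : ℝ => ε ^ (1 - η) * (borelTransform μ (E + ε * Complex.I)).im)
      (nhdsWithin 0 (Set.Ioi 0))) :
    gammaPlus μ E ≤ η * (2 - gammaMinus μ E) / (2 - η) := by
  have h2mη : (0:ℝ) < 2 - η := by linarith
  obtain ⟨c₀, hc₀, hevg⟩ := L10 h
  have hev : ∀ᶠ (ε : ℝ) in nhdsWithin (0:ℝ) (Set.Ioi 0),
      c₀ * ε^η ≤ ε * (borelTransform μ (E + ε*Complex.I)).im := by
    filter_upwards [hevg, self_mem_nhdsWithin] with ε h1 h2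
    have hε0 : (0:ℝ) < ε := h2
    have hεη : (0:ℝ) < ε^η := Real.rpow_pos_of_pos hε0 _
    have heq : ε^η * (ε^(1-η) * (borelTransform μ (E + ε*Complex.I)).im)
        = ε * (borelTransform μ (E + ε*Complex.I)).im := by
      rw [← mul_assoc, ← Real.rpow_add hε0]
      norm_num
    calc c₀ * ε^η = ε^η * c₀ := by ring
      _ ≤ ε^η * (ε^(1-η) * (borelTransform μ (E + ε*Complex.I)).im) :=
          mul_le_mul_of_nonneg_left h1.le hεη.le
      _ = ε * (borelTransform μ (E + ε*Complex.I)).im := heq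
  -- baseline bound with γ' = 0, s = 1/2
  set M : ℝ := (μ Set.univ).toReal with hM
  set K₀ : ℝ := max 1 M with hK₀def
  have hK₀1 : (1:ℝ) ≤ K₀ := le_max_left _ _
  have hK₀ : ∀ r : ℝ, 0 < r → (μ (Set.Ioo (E - r) (E + r))).toReal ≤ K₀ * r ^ (0:ℝ) := by
    intro r _
    rw [Real.rpow_zero, mul_one]
    exact le_trans (ENNReal.toReal_mono (measure_ne_top μ _)
      (measure_mono (Set.subset_univ _))) (le_max_right _ _)
  have hse0 : η < 2 + (1/2 : ℝ)*((0:ℝ)-2) := by norm_num; linarith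
  have base := L7 μ E η c₀ K₀ 0 (1/2) hc₀ hK₀1 le_rfl two_pos (by norm_num) hη0 hse0 hK₀ hev
  obtain ⟨hgp0, hub, hposμ, hlbm1⟩ := L6 μ E (c₀/2) (η/(1/2)) (half_pos hc₀) base
  have h2η : gammaPlus μ E ≤ 2*η := by
    have : η/(1/2 : ℝ) = 2*η := by norm_num; ring
    linarith [hgp0]
  have hbddle : IsBoundedUnder (· ≤ ·) (nhdsWithin (0:ℝ) (Set.Ioi 0))
      (fun r : ℝ => Real.log (μ (Set.Ioo (E - r) (E + r))).toReal / Real.log r) :=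
    ⟨η/(1/2) + 1, eventually_map.2 hub⟩
  have hbddge : IsBoundedUnder (· ≥ ·) (nhdsWithin (0:ℝ) (Set.Ioi 0))
      (fun r : ℝ => Real.log (μ (Set.Ioo (E - r) (E + r))).toReal / Real.log r) :=
    ⟨-1, eventually_map.2 hlbm1⟩
  have hΓle : gammaMinus μ E ≤ gammaPlus μ E := liminf_le_limsup hbddle hbddge
  rcases eq_or_lt_of_le hη0 with hη | hηpos
  · -- η = 0
    have h0 : gammaPlus μ E ≤ 0 := by rw [← hη] at h2η; linarith
    rw [← hη]
    norm_num
    exact h0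
  · -- 0 < η
    set Γ : ℝ := gammaMinus μ E with hΓdef
    have hΓ2 : Γ < 2 := lt_of_le_of_lt (hΓle.trans h2η) (by linarith)
    apply le_of_forall_pos_le_add
    intro θ hθ
    set T : ℝ := η * (2 - Γ) / (2 - η) with hT
    rcases le_or_gt Γ 0 with hΓ0 | hΓ0
    · -- Γ ≤ 0 : use γ' = 0
      have hT2pos : (0:ℝ) < 2*η/(2-η) := by positivity
      set s : ℝ := η/(2*η/(2-η)+θ) with hs
      have hs0 : 0 < s := by positivity
      have hslt : s < (2-η)/2 := by
        have h1 : s < η/(2*η/(2-η)) :=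
          div_lt_div_of_pos_left hηpos hT2pos (lt_add_of_pos_right _ hθ)
        have h2 : η/(2*η/(2-η)) = (2-η)/2 := by
          field_simp
        linarith
      have hse : η < 2 + s*((0:ℝ)-2) := by linarith
      have key := L7 μ E η c₀ K₀ 0 s hc₀ hK₀1 le_rfl two_pos hs0 hη0 hse hK₀ hev
      obtain ⟨hgp, _, _, _⟩ := L6 μ E (c₀/2) (η/s) (half_pos hc₀) key
      have hηs : η/s = 2*η/(2-η)+θ := by
        rw [hs]
        field_simp
      have hTT : 2*η/(2-η) ≤ T := by
        rw [hT]
        exact (div_le_div_iff_of_pos_right h2mη).2 (by nlinarith)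
      linarith [hgp]
    · -- 0 < Γ
      have hTpos : 0 < T := by
        have h1 : (0:ℝ) < 2-Γ := by linarith
        rw [hT]
        positivity
      set s : ℝ := η/(T+θ) with hs
      have hs0 : 0 < s := by positivity
      have hgap : 0 < 2 - η - s*(2-Γ) := by
        have hlt : s*(2-Γ) < 2-η := by
          rw [hs, div_mul_eq_mul_div, div_lt_iff₀ (by positivity)]
          have hTe : η*(2-Γ) = T*(2-η) := by
            rw [hT]
            field_simp
          nlinarith
        linarith
      set m : ℝ := min (Γ/2) ((2 - η - s*(2-Γ))/(2*s)) with hm'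
      have hmin0 : 0 < m := lt_min (by linarith) (by positivity)
      have hminle : m ≤ Γ/2 := min_le_left _ _
      set γ' : ℝ := Γ - m with hγ'def
      have hγ'0 : 0 < γ' := by rw [hγ'def]; linarith
      have hγ'Γ : γ' < Γ := by rw [hγ'def]; linarith
      have hγ'2 : γ' < 2 := lt_trans hγ'Γ hΓ2
      have hse : η < 2 + s*(γ'-2) := by
        have h1 : Γ - γ' ≤ (2-η-s*(2-Γ))/(2*s) := by
          rw [hγ'def]
          have h0 : Γ - (Γ - m) = m := by ring
          rw [h0]
          exact min_le_right _ _
        have h2 : s*(Γ-γ') ≤ (2-η-s*(2-Γ))/2 := by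
          calc s*(Γ-γ') ≤ s*((2-η-s*(2-Γ))/(2*s)) := by gcongr
            _ = (2-η-s*(2-Γ))/2 := by
                field_simp
        have hring : s*(2-γ') = s*(2-Γ) + s*(Γ-γ') := by ring
        nlinarith
      obtain ⟨K, hK1, hK⟩ := L8 μ E γ' hγ'0 hbddge hγ'Γ
      have key := L7 μ E η c₀ K γ' s hc₀ hK1 hγ'0.le hγ'2 hs0 hη0 hse hK hev
      obtain ⟨hgp, _, _, _⟩ := L6 μ E (c₀/2) (η/s) (half_pos hc₀) key
      have hηs : η/s = T+θ := by
        rw [hs]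
        field_simp
      linarith [hgp]
end

section
/- Let μ be a finite positive Borel measure on ℝ with Borel transform m, let 0 ≤ η < 1 and let E ∈ ℝ. If liminf_{ε→0⁺} ε^{1−η} · Im m(E+iε) > 0, then γ_μ⁺(E) ≤ 2η/(2 − η). -/
open MeasureTheory Filter Set
open Topology

theorem myinteg (μ : Measure ℝ) [IsFiniteMeasure μ] (ε E : ℝ) (hε : 0 < ε) :
    Integrable (fun x:ℝ => ((x:ℂ) - (E + ε*Complex.I))⁻¹) μ := by
  have hne : ∀ x : ℝ, (x:ℂ) - (E + ε*Complex.I) ≠ 0 := by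
    intro x hx
    have : ((x:ℂ) - (E + ε*Complex.I)).im = 0 := by rw [hx]; simp
    simp at this
    exact hε.ne' this
  have hcont : Continuous (fun x:ℝ => ((x:ℂ) - (E + ε*Complex.I))⁻¹) :=
    ((Complex.continuous_ofReal.sub continuous_const)).inv₀ hne
  refine Integrable.mono' (integrable_const ε⁻¹) hcont.aestronglyMeasurable ?_
  refine Filter.Eventually.of_forall (fun x => ?_)
  rw [norm_inv, inv_le_inv₀ (norm_pos_iff.mpr (hne x)) hε]
  calc ε = |((x:ℂ) - (E + ε*Complex.I)).im| := by simp [abs_of_pos hε]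
    _ ≤ ‖(x:ℂ) - (E + ε*Complex.I)‖ := Complex.abs_im_le_norm _
    _ = ‖(x:ℂ) - (E + ε*Complex.I)‖ := rfl

theorem imBT (μ : Measure ℝ) [IsFiniteMeasure μ] (ε E : ℝ) (hε : 0 < ε) :
    (borelTransform μ (E + ε*Complex.I)).im = ∫ x, ε / ((x-E)^2 + ε^2) ∂μ := by
  rw [borelTransform, ← RCLike.im_to_complex, ← integral_im (myinteg μ ε E hε)]
  congr 1
  ext x
  rw [RCLike.im_to_complex, Complex.inv_im]
  simp [Complex.normSq_apply]
  ring

theorem key_bound (μ : Measure ℝ) [IsFiniteMeasure μ] (ε E δ : ℝ) (hε : 0 < ε) (hδ : 0 < δ) :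
    (borelTransform μ (E + ε*Complex.I)).im
      ≤ (μ (Ioo (E-δ) (E+δ))).toReal / ε + ε/δ^2 * (μ univ).toReal := by
  rw [imBT μ ε E hε]
  have hint2 : Integrable (fun x : ℝ =>
      (Ioo (E-δ) (E+δ)).indicator (fun _ => ε⁻¹) x + ε/δ^2) μ :=
    ((integrable_const (ε⁻¹ : ℝ)).indicator measurableSet_Ioo).add (integrable_const _)
  have hint1 : Integrable (fun x : ℝ => ε / ((x-E)^2 + ε^2)) μ := by
    have hcont : Continuous (fun x : ℝ => ε / ((x-E)^2 + ε^2)) := by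
      apply continuous_const.div (by continuity)
      intro x; positivity
    refine Integrable.mono' (integrable_const ε⁻¹) hcont.aestronglyMeasurable ?_
    refine Filter.Eventually.of_forall (fun x => ?_)
    rw [Real.norm_eq_abs, abs_of_nonneg (by positivity), div_le_iff₀ (by positivity)]
    rw [inv_mul_eq_div, le_div_iff₀ hε]
    nlinarith [sq_nonneg (x-E)]
  have hle : ∀ x : ℝ, ε / ((x-E)^2 + ε^2)
      ≤ (Ioo (E-δ) (E+δ)).indicator (fun _ => ε⁻¹) x + ε/δ^2 := by
    intro x
    by_cases hx : x ∈ Ioo (E-δ) (E+δ)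
    · rw [indicator_of_mem hx]
      have h1 : ε / ((x-E)^2 + ε^2) ≤ ε⁻¹ := by
        rw [div_le_iff₀ (by positivity), inv_mul_eq_div, le_div_iff₀ hε]
        nlinarith [sq_nonneg (x-E)]
      have : (0:ℝ) ≤ ε/δ^2 := by positivity
      linarith
    · rw [indicator_of_notMem hx]
      have hxx : δ ≤ |x - E| := by
        simp only [mem_Ioo, not_and_or, not_lt] at hx
        rcases hx with hx | hx
        · rw [abs_sub_comm]; rw [le_abs]; left; linarith
        · rw [le_abs]; left; linarith
      have h2 : δ^2 ≤ (x-E)^2 := by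
        calc δ^2 ≤ |x-E|^2 := by nlinarith [abs_nonneg (x-E)]
          _ = (x-E)^2 := sq_abs _
      have : ε / ((x-E)^2 + ε^2) ≤ ε / δ^2 := by
        apply div_le_div_of_nonneg_left hε.le (by positivity)
        nlinarith
      linarith
  calc ∫ x, ε / ((x-E)^2 + ε^2) ∂μ
      ≤ ∫ x, ((Ioo (E-δ) (E+δ)).indicator (fun _ => ε⁻¹) x + ε/δ^2) ∂μ :=
        integral_mono hint1 hint2 hle
    _ = (μ (Ioo (E-δ) (E+δ))).toReal / ε + ε/δ^2 * (μ univ).toReal := by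
        rw [integral_add ((integrable_const (ε⁻¹:ℝ)).indicator measurableSet_Ioo)
          (integrable_const _), integral_indicator_const _ measurableSet_Ioo,
          integral_const]
        simp [div_eq_mul_inv, mul_comm]
        rfl

theorem tendsto_const_div_log (k : ℝ) :
    Tendsto (fun r : ℝ => k / Real.log r) (𝓝[>] (0:ℝ)) (𝓝 0) := by
  have h1 : Tendsto (fun r : ℝ => -Real.log r) (𝓝[>] (0:ℝ)) atTop :=
    tendsto_neg_atBot_atTop.comp Real.tendsto_log_nhdsGT_zero
  have h2 := h1.inv_tendsto_atTop
  have h3 := h2.const_mul (-k)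
  have heq : (fun r : ℝ => -k * (-Real.log r)⁻¹) = (fun r : ℝ => k / Real.log r) := by
    funext r; rw [inv_neg]; ring
  simp only [Pi.inv_apply] at h3
  rw [heq] at h3
  simpa using h3

/-- If `liminf_{ε→0⁺} ε^{1−η} Im m(E+iε) > 0` then
`γ_μ⁺(E) ≤ 2η / (2 − η)`. -/
theorem stmt_2 (μ : Measure ℝ) [IsFiniteMeasure μ] (η E : ℝ) (hη0 : 0 ≤ η) (hη1 : η < 1)
    (h : 0 < Filter.liminf
      (fun ε : ℝ => ε ^ (1 - η) * (borelTransform μ (E + ε * Complex.I)).im)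
      (nhdsWithin 0 (Set.Ioi 0))) :
    gammaPlus μ E ≤ 2 * η / (2 - η) := by
  set M := (μ univ).toReal with hM
  have hMnn : 0 ≤ M := ENNReal.toReal_nonneg
  have h2η : (0:ℝ) < 2 - η := by linarith
  -- Step 1: get a positive eventual lower bound
  obtain ⟨c, hc0, hcev⟩ : ∃ c : ℝ, 0 < c ∧ ∀ᶠ (ε : ℝ) in 𝓝[>] (0:ℝ),
      c ≤ ε ^ (1-η) * (borelTransform μ (E + ε*Complex.I)).im := by
    rw [Filter.liminf_eq] at h
    set S := {a : ℝ | ∀ᶠ (ε : ℝ) in 𝓝[>] (0:ℝ),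
      a ≤ ε ^ (1-η) * (borelTransform μ (E + ε*Complex.I)).im} with hS
    by_contra hcon
    push_neg at hcon
    have hle : ∀ a ∈ S, a ≤ sSup S / 2 := by
      intro a ha
      by_contra hna
      push_neg at hna
      exact (hcon a (lt_of_le_of_lt (by linarith) hna) (Filter.Eventually.mono ha fun x hx => not_lt.mpr hx)).elim
    have := Real.sSup_le hle (by linarith)
    linarith
  -- Step 2: for every b > 2η/(2-η), show gammaPlus ≤ b
  have main : ∀ b : ℝ, 2*η/(2-η) < b → gammaPlus μ E ≤ b := by
    intro b hb
    have hb0 : 0 < b := lt_of_le_of_lt (by positivity) hb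
    set β : ℝ := (η/b + (1 - η/2))/2 with hβdef
    have hb2 : 2*η < b*(2-η) := by
      have := (div_lt_iff₀ h2η).mp hb; linarith
    have hβ1 : η/b < 1 - η/2 := by
      rw [div_lt_iff₀ hb0]; nlinarith
    have hβpos : 0 < β := by
      have h1 : 0 ≤ η/b := by positivity
      have h2 : 0 < 1 - η/2 := by linarith
      rw [hβdef]; linarith
    have hβlt : β < 1 - η/2 := by rw [hβdef]; linarith
    have hβgt : η/b < β := by rw [hβdef]; linarith
    have hηβb : η/β < b := by
      rw [div_lt_iff₀ hβpos]
      have := (div_lt_iff₀ hb0).mp hβgt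
      nlinarith
    have hηβnn : 0 ≤ η/β := by positivity
    have hp : (0:ℝ) < 2 - 2*β - η := by linarith
    -- eventual smallness of ε^(2-2β-η)
    have hev2 : ∀ᶠ ε in 𝓝[>] (0:ℝ), ε^(2-2*β-η) < c/(2*(M+1)) := by
      have ht : Tendsto (fun x:ℝ => x ^ (2-2*β-η)) (𝓝[>] (0:ℝ)) (𝓝 0) := by
        have hcont := (Real.continuousAt_rpow_const 0 (2-2*β-η) (Or.inr hp.le)).tendsto
        have := hcont.mono_left (nhdsWithin_le_nhds (s := Ioi (0:ℝ)))
        rwa [Real.zero_rpow hp.ne'] at this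
      exact ht.eventually_lt_const (by positivity)
    have hsmall : ∀ᶠ ε in 𝓝[>] (0:ℝ), ε ∈ Ioo (0:ℝ) 1 :=
      Ioo_mem_nhdsGT_of_mem ⟨le_refl (0:ℝ), one_pos⟩
    -- eventual measure lower bound at scale ε^β
    have hμεv : ∀ᶠ ε in 𝓝[>] (0:ℝ),
        (c/2) * ε^η ≤ (μ (Ioo (E - ε^β) (E + ε^β))).toReal := by
      filter_upwards [hcev, hev2, hsmall] with ε h1 h2 h3
      obtain ⟨hε0, hε1⟩ := h3
      set T := (μ (Ioo (E - ε^β) (E + ε^β))).toReal with hT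
      have hδ : 0 < ε^β := Real.rpow_pos_of_pos hε0 _
      have hkb := key_bound μ ε E (ε^β) hε0 hδ
      have hmul : c ≤ ε^(1-η) * (T/ε + ε/(ε^β)^2 * M) :=
        le_trans h1 (mul_le_mul_of_nonneg_left hkb (Real.rpow_nonneg hε0.le _))
      have ea : ε ^ (-η:ℝ) = ε^(1-η) / ε := by
        rw [show (-η:ℝ) = (1-η) - 1 by ring, Real.rpow_sub hε0, Real.rpow_one]
      have eb : ε ^ (1 - 2*β) = ε / (ε^β)^2 := by
        rw [Real.rpow_sub hε0, Real.rpow_one]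
        congr 1
        rw [sq, ← Real.rpow_add hε0]
        norm_num [two_mul]
      have ec : ε^(1-η) * ε^(1-2*β) = ε^(2-2*β-η) := by
        rw [← Real.rpow_add hε0, show (1-η)+(1-2*β) = 2-2*β-η by ring]
      have heq : ε^(1-η) * (T/ε + ε/(ε^β)^2 * M) = ε^(-η:ℝ)*T + ε^(2-2*β-η)*M := by
        rw [← eb, ← ec, ea]; ring
      rw [heq] at hmul
      have h4 : ε^(2-2*β-η)*M ≤ c/2 := by
        have h5 : ε^(2-2*β-η)*M ≤ c/(2*(M+1))*M :=
          mul_le_mul_of_nonneg_right h2.le hMnn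
        have h6 : c/(2*(M+1))*M ≤ c/2 := by
          rw [div_mul_eq_mul_div, div_le_div_iff₀ (by positivity) (by norm_num)]
          nlinarith
        linarith
      have h7 : c/2 ≤ ε^(-η:ℝ)*T := by linarith
      have h8 : (c/2)*ε^η ≤ (ε^(-η:ℝ)*T)*ε^η :=
        mul_le_mul_of_nonneg_right h7 (Real.rpow_nonneg hε0.le η)
      have h9 : (ε^(-η:ℝ)*T)*ε^η = T := by
        rw [mul_comm (ε^(-η:ℝ)) T, mul_assoc, ← Real.rpow_add hε0,
          show -η+η = (0:ℝ) by ring, Real.rpow_zero, mul_one]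
      linarith
    -- reparametrize to radius r
    have hmap : Tendsto (fun r:ℝ => r^(1/β)) (𝓝[>] (0:ℝ)) (𝓝[>] (0:ℝ)) := by
      rw [tendsto_nhdsWithin_iff]
      constructor
      · have hcont := (Real.continuousAt_rpow_const 0 (1/β) (Or.inr (by positivity))).tendsto
        have := hcont.mono_left (nhdsWithin_le_nhds (s := Ioi (0:ℝ)))
        rwa [Real.zero_rpow (by positivity : (1:ℝ)/β ≠ 0)] at this
      · filter_upwards [self_mem_nhdsWithin] with r hr
        exact Real.rpow_pos_of_pos hr _
    have hμr : ∀ᶠ r in 𝓝[>] (0:ℝ),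
        (c/2) * r^(η/β) ≤ (μ (Ioo (E - r) (E + r))).toReal := by
      filter_upwards [hmap.eventually hμεv, self_mem_nhdsWithin] with r h1 hr
      have hr0 : (0:ℝ) < r := hr
      have e1 : (r^(1/β))^β = r := by
        rw [← Real.rpow_mul hr0.le, one_div_mul_cancel hβpos.ne', Real.rpow_one]
      have e2 : (r^(1/β))^η = r^(η/β) := by
        rw [← Real.rpow_mul hr0.le, show (1/β)*η = η/β by ring]
      rw [e1, e2] at h1
      exact h1
    -- log estimate
    have hδb : 0 < b - η/β := by linarith
    have hev_le : ∀ᶠ r in 𝓝[>] (0:ℝ),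
        Real.log ((μ (Ioo (E-r) (E+r))).toReal) / Real.log r ≤ b := by
      filter_upwards [hμr, hsmall,
        (tendsto_const_div_log (Real.log (c/2))).eventually_lt_const hδb]
        with r h1 h2 h3
      obtain ⟨hr0, hr1⟩ := h2
      set T := (μ (Ioo (E-r) (E+r))).toReal with hT
      have hrp : 0 < r^(η/β) := Real.rpow_pos_of_pos hr0 _
      have hT0 : 0 < T := lt_of_lt_of_le (by positivity) h1
      have hlogr : Real.log r < 0 := Real.log_neg hr0 hr1
      have hlog1 : Real.log (c/2) + (η/β) * Real.log r ≤ Real.log T := by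
        have hll := Real.log_le_log (by positivity) h1
        rwa [Real.log_mul (by positivity) hrp.ne', Real.log_rpow hr0] at hll
      have h6 : Real.log T / Real.log r
          ≤ (Real.log (c/2) + (η/β) * Real.log r) / Real.log r :=
        (div_le_div_right_of_neg hlogr).mpr hlog1
      have h7 : (Real.log (c/2) + (η/β) * Real.log r) / Real.log r
          = Real.log (c/2)/Real.log r + η/β := by
        rw [add_div, mul_div_assoc, div_self hlogr.ne, mul_one]
      rw [h7] at h6
      linarith
    have hev_ge : ∀ᶠ r in 𝓝[>] (0:ℝ),
        (-1:ℝ) ≤ Real.log ((μ (Ioo (E-r) (E+r))).toReal) / Real.log r := by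
      filter_upwards [hμr, hsmall,
        (tendsto_const_div_log (Real.log M)).eventually_const_lt (by norm_num : (-1:ℝ) < 0)]
        with r h1 h2 h3
      obtain ⟨hr0, hr1⟩ := h2
      set T := (μ (Ioo (E-r) (E+r))).toReal with hT
      have hrp : 0 < r^(η/β) := Real.rpow_pos_of_pos hr0 _
      have hT0 : 0 < T := lt_of_lt_of_le (by positivity) h1
      have hlogr : Real.log r < 0 := Real.log_neg hr0 hr1
      have hTM : T ≤ M := by
        rw [hT, hM]
        exact ENNReal.toReal_le_toReal (measure_ne_top μ _) (measure_ne_top μ _)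
          |>.mpr (measure_mono (subset_univ _))
      have hlog2 : Real.log T ≤ Real.log M := Real.log_le_log hT0 hTM
      have h6 : Real.log M / Real.log r ≤ Real.log T / Real.log r :=
        (div_le_div_right_of_neg hlogr).mpr hlog2
      linarith
    have hcob : IsCoboundedUnder (· ≤ ·) (𝓝[>] (0:ℝ))
        (fun r => Real.log ((μ (Ioo (E-r) (E+r))).toReal) / Real.log r) :=
      isCoboundedUnder_le_of_eventually_le _ hev_ge
    exact limsup_le_of_le hcob hev_le
  by_contra hcon
  push_neg at hcon
  have := main ((2*η/(2-η) + gammaPlus μ E)/2) (by linarith)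
  linarith
end
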